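/- arXiv:1607.07654 — 3 statements merged into one kernel-verified Lean document; each statement's English description precedes it below -/
import Mathlib

section
/- If there exists a strictly balanced s-uniform hypergraph with density ρ, then there exists a strictly balanced (s+1)-uniform hypergraph with the same density ρ. -/
open scoped Classical

/-- A finite `s`-uniform hypergraph on a vertex set of natural numbers. -/
structure SUHypergraph (s : ℕ) where
  V : Finset ℕ
  E : Finset (Finset ℕ)
  card_edges : ∀ e ∈ E, e.card = s
  edges_sub : ∀ e ∈ E, e ⊆ V

namespace SUHypergraph

/-- The density `|E|/|V|` of a hypergraph. -/
noncomputable def density {s : ℕ} (G : SUHypergraph s) : ℚ :=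
  (G.E.card : ℚ) / (G.V.card : ℚ)

/-- `G` is strictly balanced: every proper subhypergraph with at least one
vertex has strictly smaller density. -/
def StrictlyBalanced {s : ℕ} (G : SUHypergraph s) : Prop :=
  G.V.Nonempty ∧ ∀ H : SUHypergraph s, H.V ⊆ G.V → H.E ⊆ G.E → H.V.Nonempty →
    ¬(H.V = G.V ∧ H.E = G.E) → H.density < G.density

/-- The subhypergraph of `G` induced on the vertex set `S`. -/
def restrict {s : ℕ} (G : SUHypergraph s) (S : Finset ℕ) : SUHypergraph s where
  V := G.V ∩ S
  E := G.E.filter (fun e => e ⊆ S)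
  card_edges := fun e he => G.card_edges e (Finset.mem_filter.mp he).1
  edges_sub := fun e he a ha => Finset.mem_inter.mpr
    ⟨G.edges_sub e (Finset.mem_filter.mp he).1 ha, (Finset.mem_filter.mp he).2 ha⟩

/-- A cycle `(v 0, e 0, v 1, e 1, …, v (m-1), e (m-1), v m = v 0)` in `G`. -/
def IsCycle {s : ℕ} (G : SUHypergraph s) (m : ℕ) (v : ℕ → ℕ) (e : ℕ → Finset ℕ) : Prop :=
  0 < m ∧ v m = v 0 ∧ e m = e 0 ∧
  (∀ i < m, e i ∈ G.E) ∧ (∀ i < m, v i ∈ G.V) ∧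
  (∀ i < m, v i ≠ v (i + 1)) ∧ (∀ i < m, e i ≠ e (i + 1)) ∧
  (∀ i < m, v i ∈ e i ∧ v (i + 1) ∈ e i)

/-- `G` is connected: it is nonempty and any two vertices are joined by a
chain of edges. -/
def Connected {s : ℕ} (G : SUHypergraph s) : Prop :=
  G.V.Nonempty ∧ ∀ u ∈ G.V, ∀ w ∈ G.V,
    Relation.ReflTransGen (fun a b => ∃ e ∈ G.E, a ∈ e ∧ b ∈ e) u w

/-- A tree is a connected hypergraph without cycles. -/
def IsTree {s : ℕ} (G : SUHypergraph s) : Prop :=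
  G.Connected ∧ ¬ ∃ m v e, G.IsCycle m v e

/-- For a rooted pair: number of nonroot vertices minus `α` times the number of
edges with at least one nonroot vertex, for roots `S` in the hypergraph `K`. -/
noncomputable def exVal {s : ℕ} (α : ℝ) (S : Finset ℕ) (K : SUHypergraph s) : ℝ :=
  ((K.V \ S).card : ℝ) - ((K.E.filter (fun f => ¬ f ⊆ S)).card : ℝ) * α

/-- The rooted hypergraph `(S, K)` is dense: `v - e·α < 0`. -/
noncomputable def IsDense {s : ℕ} (α : ℝ) (S : Finset ℕ) (K : SUHypergraph s) : Prop :=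
  exVal α S K < 0

/-- The rooted hypergraph `(S, K)` is sparse: `v - e·α > 0`. -/
noncomputable def IsSparse {s : ℕ} (α : ℝ) (S : Finset ℕ) (K : SUHypergraph s) : Prop :=
  0 < exVal α S K

/-- `(R, K)` is rigid: every nailextension `(S, K)` with `R ⊆ S ⊊ V(K)` is dense. -/
noncomputable def Rigid {s : ℕ} (α : ℝ) (R : Finset ℕ) (K : SUHypergraph s) : Prop :=
  ∀ S : Finset ℕ, R ⊆ S → S ⊂ K.V → IsDense α S K

/-- `(R, K)` is safe: every subextension `(R, K|_S)` with `R ⊊ S ⊆ V(K)` is sparse. -/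
noncomputable def Safe {s : ℕ} (α : ℝ) (R : Finset ℕ) (K : SUHypergraph s) : Prop :=
  ∀ S : Finset ℕ, R ⊂ S → S ⊆ K.V → IsSparse α R (K.restrict S)

/-- `(R, K)` is minimally safe: safe, with no safe nailextension. -/
noncomputable def MinimallySafe {s : ℕ} (α : ℝ) (R : Finset ℕ) (K : SUHypergraph s) : Prop :=
  Safe α R K ∧ ¬ ∃ S : Finset ℕ, R ⊂ S ∧ S ⊂ K.V ∧ Safe α S K

/-- A rigid `t`-chain `x 0 ⊆ x 1 ⊆ … ⊆ x k` in `G`: each step adds at most `t`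
vertices and each `(x i, G|_{x (i+1)})` is rigid. -/
noncomputable def IsRigidChain {s : ℕ} (α : ℝ) (G : SUHypergraph s) (t k : ℕ)
    (x : ℕ → Finset ℕ) : Prop :=
  (∀ i < k, x i ⊆ x (i + 1)) ∧ (∀ i < k, (x (i + 1) \ x i).card ≤ t) ∧
  (∀ i ≤ k, x i ⊆ G.V) ∧ (∀ i < k, Rigid α (x i) (G.restrict (x (i + 1))))

/-- `C` is the `t`-closure of `X` in `G`: it is the endpoint of a rigid
`t`-chain starting at `X` and contains the endpoint of every such chain. -/
noncomputable def IsTClosure {s : ℕ} (α : ℝ) (G : SUHypergraph s) (t : ℕ)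
    (X C : Finset ℕ) : Prop :=
  (∃ k x, IsRigidChain α G t k x ∧ x 0 = X ∧ x k = C) ∧
  ∀ k' x', IsRigidChain α G t k' x' → x' 0 = X → x' k' ⊆ C

end SUHypergraph

open SUHypergraph

/-- The possible edges of an `s`-uniform hypergraph on `Fin n`. -/
def edgeCandidates (s n : ℕ) : Finset (Finset (Fin n)) :=
  Finset.univ.filter (fun e => e.card = s)

/-- The probability of the event `A` under the binomial random `s`-uniform
hypergraph `G^s(n,p)`: each of the `C(n,s)` possible edges appears
independently with probability `p`. -/
noncomputable def hyperProb (s n : ℕ) (p : ℝ) (A : Set (Finset (Finset (Fin n)))) : ℝ :=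
  ∑ E ∈ (edgeCandidates s n).powerset,
    if E ∈ A then p ^ E.card * (1 - p) ^ ((edgeCandidates s n).card - E.card) else 0

/-- The `s`-uniform hypergraph on vertex set `{0,…,n-1}` determined by an
edge set over `Fin n`. -/
noncomputable def ofEdges (s n : ℕ) (E : Finset (Finset (Fin n))) : SUHypergraph s where
  V := Finset.range n
  E := (E.filter (fun e => e.card = s)).image (fun e => e.image Fin.val)
  card_edges := by
    intro f hf
    simp only [Finset.mem_image, Finset.mem_filter] at hf
    obtain ⟨e, ⟨_, hcard⟩, rfl⟩ := hf
    rw [Finset.card_image_of_injective _ Fin.val_injective]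
    exact hcard
  edges_sub := by
    intro f hf a ha
    simp only [Finset.mem_image, Finset.mem_filter] at hf
    obtain ⟨e, _, rfl⟩ := hf
    simp only [Finset.mem_image] at ha
    obtain ⟨b, _, rfl⟩ := ha
    exact Finset.mem_range.mpr b.isLt

section AuxStmt0

open Finset

private lemma evInj : Function.Injective (fun v : ℕ => 2 * v) := by
  intro a b h
  dsimp only at h
  omega

private lemma odInj : Function.Injective (fun v : ℕ => 2 * v + 1) := by
  intro a b h
  dsimp only at h
  omega

private lemma filt1 (u : ℕ) (e : Finset ℕ) :
    (insert (2*u+1) (e.image (fun v => 2*v))).filter (fun k => k % 2 = 0)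
      = e.image (fun v => 2*v) := by
  rw [Finset.filter_insert, if_neg (by omega)]
  apply Finset.filter_true_of_mem
  intro x hx
  simp only [Finset.mem_image] at hx
  obtain ⟨v, -, rfl⟩ := hx
  omega

private lemma filt2 (u : ℕ) (e : Finset ℕ) :
    (insert (2*u) (e.image (fun v => 2*v+1))).filter (fun k => k % 2 = 1)
      = e.image (fun v => 2*v+1) := by
  rw [Finset.filter_insert, if_neg (by omega)]
  apply Finset.filter_true_of_mem
  intro x hx
  simp only [Finset.mem_image] at hx
  obtain ⟨v, -, rfl⟩ := hx
  omega

private lemma rec1 (u : ℕ) (e : Finset ℕ) :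
    ((insert (2*u+1) (e.image (fun v => 2*v))).filter (fun k => k % 2 = 0)).image
      (fun k => k / 2) = e := by
  rw [filt1, Finset.image_image]
  have h : ∀ x ∈ e, ((fun k => k / 2) ∘ fun v => 2 * v) x = id x := by
    intro x hx
    simp only [Function.comp_apply, id_eq]
    omega
  rw [Finset.image_congr h, Finset.image_id]

private lemma rec2 (u : ℕ) (e : Finset ℕ) :
    ((insert (2*u) (e.image (fun v => 2*v+1))).filter (fun k => k % 2 = 1)).image
      (fun k => k / 2) = e := by
  rw [filt2, Finset.image_image]
  have h : ∀ x ∈ e, ((fun k => k / 2) ∘ fun v => 2 * v + 1) x = id x := by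
    intro x hx
    simp only [Function.comp_apply, id_eq]
    omega
  rw [Finset.image_congr h, Finset.image_id]

private lemma inj1 (u : ℕ) :
    Function.Injective (fun e : Finset ℕ => insert (2*u+1) (e.image (fun v => 2*v))) := by
  intro e e' h
  dsimp only at h
  have := congrArg (fun x : Finset ℕ => (x.filter (fun k => k % 2 = 0)).image (fun k => k / 2)) h
  rwa [rec1, rec1] at this

private lemma inj2 (u : ℕ) :
    Function.Injective (fun e : Finset ℕ => insert (2*u) (e.image (fun v => 2*v+1))) := by
  intro e e' h
  dsimp only at h
  have := congrArg (fun x : Finset ℕ => (x.filter (fun k => k % 2 = 1)).image (fun k => k / 2)) h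
  rwa [rec2, rec2] at this

private lemma oddcard1 (u : ℕ) (e : Finset ℕ) :
    ((insert (2*u+1) (e.image (fun v => 2*v))).filter (fun k => k % 2 = 1)).card = 1 := by
  rw [Finset.filter_insert, if_pos (by omega)]
  have h : (e.image (fun v => 2*v)).filter (fun k => k % 2 = 1) = ∅ := by
    rw [Finset.filter_eq_empty_iff]
    intro x hx
    simp only [Finset.mem_image] at hx
    obtain ⟨v, -, rfl⟩ := hx
    omega
  rw [h]
  simp

private lemma oddcard2 (u : ℕ) (e : Finset ℕ) :
    ((insert (2*u) (e.image (fun v => 2*v+1))).filter (fun k => k % 2 = 1)).card = e.card := by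
  rw [filt2, Finset.card_image_of_injective _ odInj]

/-- The doubled `(s+1)`-uniform hypergraph. -/
private noncomputable def dbl {s : ℕ} (G : SUHypergraph s) (u : ℕ) (hu : u ∈ G.V) :
    SUHypergraph (s + 1) where
  V := G.V.image (fun v => 2*v) ∪ G.V.image (fun v => 2*v+1)
  E := G.E.image (fun e => insert (2*u+1) (e.image (fun v => 2*v))) ∪
       G.E.image (fun e => insert (2*u) (e.image (fun v => 2*v+1)))
  card_edges := by
    intro f hf
    rcases Finset.mem_union.mp hf with hf | hf
    · simp only [Finset.mem_image] at hf
      obtain ⟨e, he, rfl⟩ := hf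
      rw [Finset.card_insert_of_notMem, Finset.card_image_of_injective _ evInj,
        G.card_edges e he]
      intro hx
      simp only [Finset.mem_image] at hx
      obtain ⟨v, -, hv⟩ := hx
      omega
    · simp only [Finset.mem_image] at hf
      obtain ⟨e, he, rfl⟩ := hf
      rw [Finset.card_insert_of_notMem, Finset.card_image_of_injective _ odInj,
        G.card_edges e he]
      intro hx
      simp only [Finset.mem_image] at hx
      obtain ⟨v, -, hv⟩ := hx
      omega
  edges_sub := by
    intro f hf x hx
    rcases Finset.mem_union.mp hf with hf | hf
    · simp only [Finset.mem_image] at hf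
      obtain ⟨e, he, rfl⟩ := hf
      rcases Finset.mem_insert.mp hx with rfl | hx
      · exact Finset.mem_union_right _ (Finset.mem_image_of_mem _ hu)
      · simp only [Finset.mem_image] at hx
        obtain ⟨v, hv, rfl⟩ := hx
        exact Finset.mem_union_left _ (Finset.mem_image_of_mem _ (G.edges_sub e he hv))
    · simp only [Finset.mem_image] at hf
      obtain ⟨e, he, rfl⟩ := hf
      rcases Finset.mem_insert.mp hx with rfl | hx
      · exact Finset.mem_union_left _ (Finset.mem_image_of_mem _ hu)
      · simp only [Finset.mem_image] at hx
        obtain ⟨v, hv, rfl⟩ := hx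
        exact Finset.mem_union_right _ (Finset.mem_image_of_mem _ (G.edges_sub e he hv))

end AuxStmt0
section MainStmt0

open Finset

private lemma subcount_lt {s : ℕ} (G : SUHypergraph s) (hV : G.V.Nonempty)
    (hbal : ∀ H : SUHypergraph s, H.V ⊆ G.V → H.E ⊆ G.E → H.V.Nonempty →
      ¬(H.V = G.V ∧ H.E = G.E) → H.density < G.density)
    (S : Finset ℕ) (hS : S ⊆ G.V) (hSne : S.Nonempty) (hSV : S ≠ G.V) :
    ((G.E.filter (fun e => e ⊆ S)).card : ℚ) * G.V.card < (G.E.card : ℚ) * S.card := by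
  have hiS : G.V ∩ S = S := Finset.inter_eq_right.mpr hS
  have h1 : (G.restrict S).density < G.density := by
    apply hbal
    · exact Finset.inter_subset_left
    · exact Finset.filter_subset _ _
    · show (G.V ∩ S).Nonempty
      rw [hiS]; exact hSne
    · rintro ⟨h2, -⟩
      apply hSV
      rw [show (G.restrict S).V = G.V ∩ S from rfl, hiS] at h2
      exact h2
  have hVc : (G.restrict S).V.card = S.card := by
    show (G.V ∩ S).card = S.card; rw [hiS]
  unfold SUHypergraph.density at h1
  rw [hVc] at h1
  have hS0 : (0:ℚ) < (S.card : ℚ) := by exact_mod_cast Finset.card_pos.mpr hSne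
  have hn0 : (0:ℚ) < (G.V.card : ℚ) := by exact_mod_cast Finset.card_pos.mpr hV
  rw [div_lt_div_iff₀ hS0 hn0] at h1
  exact h1

private lemma subcount_le {s : ℕ} (G : SUHypergraph s) (hs : 2 ≤ s) (hV : G.V.Nonempty)
    (hbal : ∀ H : SUHypergraph s, H.V ⊆ G.V → H.E ⊆ G.E → H.V.Nonempty →
      ¬(H.V = G.V ∧ H.E = G.E) → H.density < G.density)
    (S : Finset ℕ) (hS : S ⊆ G.V) :
    ((G.E.filter (fun e => e ⊆ S)).card : ℚ) * G.V.card ≤ (G.E.card : ℚ) * S.card := by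
  rcases S.eq_empty_or_nonempty with rfl | hSne
  · have h0 : G.E.filter (fun e => e ⊆ (∅ : Finset ℕ)) = ∅ := by
      rw [Finset.filter_eq_empty_iff]
      intro e he h0
      have hc := G.card_edges e he
      rw [Finset.subset_empty] at h0
      subst h0
      simp at hc
      omega
    rw [h0]
    simp
  · by_cases hSV : S = G.V
    · subst hSV
      have h1 : (G.E.filter (fun e => e ⊆ G.V)).card ≤ G.E.card := Finset.card_filter_le _ _
      have h2 : (0:ℚ) ≤ (G.V.card : ℚ) := by positivity
      exact mul_le_mul_of_nonneg_right (by exact_mod_cast h1) h2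
    · exact le_of_lt (subcount_lt G hV hbal S hS hSne hSV)

set_option maxHeartbeats 2000000 in
private lemma double_exists {s : ℕ} (hs : 2 ≤ s) (G : SUHypergraph s)
    (hG : G.StrictlyBalanced) (hm : 0 < G.E.card) :
    ∃ H : SUHypergraph (s + 1), H.StrictlyBalanced ∧ H.density = G.density := by
  obtain ⟨hne, hbal⟩ := hG
  obtain ⟨u, hu⟩ := hne
  have hne : G.V.Nonempty := ⟨u, hu⟩
  have hn : 0 < G.V.card := Finset.card_pos.mpr hne
  -- basic facts about dbl
  have hVdisj : Disjoint (G.V.image (fun v => 2*v)) (G.V.image (fun v => 2*v+1)) := by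
    rw [Finset.disjoint_left]
    intro x h1 h2
    simp only [Finset.mem_image] at h1 h2
    obtain ⟨v, -, rfl⟩ := h1
    obtain ⟨w, -, hw⟩ := h2
    omega
  have hEdisj : Disjoint (G.E.image (fun e => insert (2*u+1) (e.image (fun v => 2*v))))
      (G.E.image (fun e => insert (2*u) (e.image (fun v => 2*v+1)))) := by
    rw [Finset.disjoint_left]
    intro x h1 h2
    simp only [Finset.mem_image] at h1 h2
    obtain ⟨e, he, rfl⟩ := h1
    obtain ⟨f, hf, hfx⟩ := h2
    have c1 := oddcard1 u e
    have c2 := oddcard2 u f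
    rw [hfx] at c2
    rw [c1] at c2
    have := G.card_edges f hf
    omega
  have hVcard : (dbl G u hu).V.card = 2 * G.V.card := by
    show (G.V.image (fun v => 2*v) ∪ G.V.image (fun v => 2*v+1)).card = 2 * G.V.card
    rw [Finset.card_union_of_disjoint hVdisj, Finset.card_image_of_injective _ evInj,
      Finset.card_image_of_injective _ odInj]
    omega
  have hEcard : (dbl G u hu).E.card = 2 * G.E.card := by
    show (G.E.image (fun e => insert (2*u+1) (e.image (fun v => 2*v))) ∪
      G.E.image (fun e => insert (2*u) (e.image (fun v => 2*v+1)))).card = 2 * G.E.card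
    rw [Finset.card_union_of_disjoint hEdisj, Finset.card_image_of_injective _ (inj1 u),
      Finset.card_image_of_injective _ (inj2 u)]
    omega
  refine ⟨dbl G u hu, ?_, ?_⟩
  constructor
  · exact ⟨2*u, Finset.mem_union_left _ (Finset.mem_image_of_mem _ hu)⟩
  · intro K hKV hKE hKne hKprop
    classical
    set A := G.V.filter (fun v => 2*v ∈ K.V) with hA
    set B := G.V.filter (fun v => 2*v+1 ∈ K.V) with hB
    have hAsub : A ⊆ G.V := Finset.filter_subset _ _
    have hBsub : B ⊆ G.V := Finset.filter_subset _ _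
    have hKVeq : K.V = A.image (fun v => 2*v) ∪ B.image (fun v => 2*v+1) := by
      ext x
      constructor
      · intro hx
        have hx' := hKV hx
        rcases Finset.mem_union.mp hx' with h | h
        · simp only [Finset.mem_image] at h
          obtain ⟨v, hv, rfl⟩ := h
          refine Finset.mem_union_left _ (Finset.mem_image_of_mem _ ?_)
          rw [hA]
          exact Finset.mem_filter.mpr ⟨hv, hx⟩
        · simp only [Finset.mem_image] at h
          obtain ⟨v, hv, rfl⟩ := h
          refine Finset.mem_union_right _ (Finset.mem_image_of_mem _ ?_)
          rw [hB]
          exact Finset.mem_filter.mpr ⟨hv, hx⟩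
      · intro hx
        rcases Finset.mem_union.mp hx with h | h
        · simp only [Finset.mem_image] at h
          obtain ⟨v, hv, rfl⟩ := h
          rw [hA] at hv
          exact (Finset.mem_filter.mp hv).2
        · simp only [Finset.mem_image] at h
          obtain ⟨v, hv, rfl⟩ := h
          rw [hB] at hv
          exact (Finset.mem_filter.mp hv).2
    have hKVcard : K.V.card = A.card + B.card := by
      rw [hKVeq, Finset.card_union_of_disjoint
        (hVdisj.mono (Finset.image_subset_image hAsub) (Finset.image_subset_image hBsub)),
        Finset.card_image_of_injective _ evInj, Finset.card_image_of_injective _ odInj]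
    set E1 := K.E ∩ G.E.image (fun e => insert (2*u+1) (e.image (fun v => 2*v))) with hE1
    set E2 := K.E ∩ G.E.image (fun e => insert (2*u) (e.image (fun v => 2*v+1))) with hE2
    have hKEeq : K.E = E1 ∪ E2 := by
      rw [hE1, hE2, ← Finset.inter_union_distrib_left]
      exact (Finset.inter_eq_left.mpr hKE).symm
    have hKEcard : K.E.card = E1.card + E2.card := by
      rw [hKEeq, Finset.card_union_of_disjoint
        (hEdisj.mono Finset.inter_subset_right Finset.inter_subset_right)]
    have hE1le : E1.card ≤ (G.E.filter (fun e => e ⊆ A)).card := by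
      apply Finset.card_le_card_of_injOn
        (fun x => (x.filter (fun k => k % 2 = 0)).image (fun k => k / 2))
      · intro x hx
        obtain ⟨hxK, hxim⟩ := Finset.mem_inter.mp hx
        simp only [Finset.mem_image] at hxim
        obtain ⟨e, he, rfl⟩ := hxim
        dsimp only
        rw [rec1]
        refine Finset.mem_filter.mpr ⟨he, ?_⟩
        intro v hv
        rw [hA]
        refine Finset.mem_filter.mpr ⟨G.edges_sub e he hv, ?_⟩
        exact K.edges_sub _ hxK (Finset.mem_insert_of_mem (Finset.mem_image_of_mem _ hv))
      · intro x hx y hy hxy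
        obtain ⟨-, hxim⟩ := Finset.mem_inter.mp hx
        obtain ⟨-, hyim⟩ := Finset.mem_inter.mp hy
        simp only [Finset.mem_image] at hxim hyim
        obtain ⟨e, -, rfl⟩ := hxim
        obtain ⟨f, -, rfl⟩ := hyim
        dsimp only at hxy
        rw [rec1, rec1] at hxy
        rw [hxy]
    have hE2le : E2.card ≤ (G.E.filter (fun e => e ⊆ B)).card := by
      apply Finset.card_le_card_of_injOn
        (fun x => (x.filter (fun k => k % 2 = 1)).image (fun k => k / 2))
      · intro x hx
        obtain ⟨hxK, hxim⟩ := Finset.mem_inter.mp hx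
        simp only [Finset.mem_image] at hxim
        obtain ⟨e, he, rfl⟩ := hxim
        dsimp only
        rw [rec2]
        refine Finset.mem_filter.mpr ⟨he, ?_⟩
        intro v hv
        rw [hB]
        refine Finset.mem_filter.mpr ⟨G.edges_sub e he hv, ?_⟩
        exact K.edges_sub _ hxK (Finset.mem_insert_of_mem (Finset.mem_image_of_mem _ hv))
      · intro x hx y hy hxy
        obtain ⟨-, hxim⟩ := Finset.mem_inter.mp hx
        obtain ⟨-, hyim⟩ := Finset.mem_inter.mp hy
        simp only [Finset.mem_image] at hxim hyim
        obtain ⟨e, -, rfl⟩ := hxim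
        obtain ⟨f, -, rfl⟩ := hyim
        dsimp only at hxy
        rw [rec2, rec2] at hxy
        rw [hxy]
    have hu1 : 0 < E1.card → u ∈ B := by
      intro h
      obtain ⟨x, hx⟩ := Finset.card_pos.mp h
      obtain ⟨hxK, hxim⟩ := Finset.mem_inter.mp hx
      simp only [Finset.mem_image] at hxim
      obtain ⟨e, he, rfl⟩ := hxim
      have : 2*u+1 ∈ K.V := K.edges_sub _ hxK (Finset.mem_insert_self _ _)
      rw [hB]
      exact Finset.mem_filter.mpr ⟨hu, this⟩
    have hu2 : 0 < E2.card → u ∈ A := by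
      intro h
      obtain ⟨x, hx⟩ := Finset.card_pos.mp h
      obtain ⟨hxK, hxim⟩ := Finset.mem_inter.mp hx
      simp only [Finset.mem_image] at hxim
      obtain ⟨e, he, rfl⟩ := hxim
      have : 2*u ∈ K.V := K.edges_sub _ hxK (Finset.mem_insert_self _ _)
      rw [hA]
      exact Finset.mem_filter.mpr ⟨hu, this⟩
    -- now the density comparison
    have hKV0 : (0:ℚ) < (K.V.card : ℚ) := by exact_mod_cast Finset.card_pos.mpr hKne
    have hHV0 : (0:ℚ) < ((dbl G u hu).V.card : ℚ) := by
      rw [hVcard]; exact_mod_cast Nat.mul_pos (by norm_num) hn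
    unfold SUHypergraph.density
    rw [div_lt_div_iff₀ hKV0 hHV0, hVcard, hEcard, hKVcard, hKEcard]
    push_cast
    have key1 : ((E1.card : ℚ)) * G.V.card ≤ (G.E.card : ℚ) * A.card :=
      le_trans (mul_le_mul_of_nonneg_right (Nat.cast_le.mpr hE1le : ((E1.card : ℚ)) ≤ ((G.E.filter (fun e => e ⊆ A)).card : ℚ)) (Nat.cast_nonneg G.V.card))
        (subcount_le G hs hne hbal A hAsub)
    have key2 : ((E2.card : ℚ)) * G.V.card ≤ (G.E.card : ℚ) * B.card :=
      le_trans (mul_le_mul_of_nonneg_right (Nat.cast_le.mpr hE2le : ((E2.card : ℚ)) ≤ ((G.E.filter (fun e => e ⊆ B)).card : ℚ)) (Nat.cast_nonneg G.V.card))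
        (subcount_le G hs hne hbal B hBsub)
    have habpos : 0 < A.card + B.card := by rw [← hKVcard]; exact Finset.card_pos.mpr hKne
    have hmQ : (1:ℚ) ≤ (G.E.card : ℚ) := by exact_mod_cast hm
    have hnQ : (1:ℚ) ≤ (G.V.card : ℚ) := by exact_mod_cast hn
    suffices T : ((E1.card : ℚ) + E2.card) * G.V.card <
        (G.E.card : ℚ) * ((A.card : ℚ) + B.card) by nlinarith [T]
    rcases Nat.eq_zero_or_pos E1.card with h1 | h1
    · rcases Nat.eq_zero_or_pos E2.card with h2 | h2
      · rw [h1, h2]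
        push_cast
        have : (0:ℚ) < (A.card : ℚ) + B.card := by exact_mod_cast habpos
        nlinarith
      · -- E1 empty, E2 nonempty: u ∈ A
        have huA := hu2 h2
        have haQ : (1:ℚ) ≤ (A.card : ℚ) := by
          exact_mod_cast Finset.card_pos.mpr ⟨u, huA⟩
        rw [h1]
        push_cast
        nlinarith [key2]
    · rcases Nat.eq_zero_or_pos E2.card with h2 | h2
      · have huB := hu1 h1
        have hbQ : (1:ℚ) ≤ (B.card : ℚ) := by
          exact_mod_cast Finset.card_pos.mpr ⟨u, huB⟩
        rw [h2]
        push_cast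
        nlinarith [key1]
      · -- both nonempty
        have huA := hu2 h2
        have huB := hu1 h1
        by_cases hAV : A = G.V
        · by_cases hBV : B = G.V
          · -- both full
            have haV : A.card = G.V.card := by rw [hAV]
            have hbV : B.card = G.V.card := by rw [hBV]
            by_cases hm1 : E1.card = G.E.card
            · by_cases hm2 : E2.card = G.E.card
              · exfalso
                apply hKprop
                constructor
                · apply Finset.Subset.antisymm hKV
                  intro x hx
                  rcases Finset.mem_union.mp hx with h | h
                  · simp only [Finset.mem_image] at h
                    obtain ⟨v, hv, rfl⟩ := h
                    rw [← hAV] at hv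
                    rw [hA] at hv
                    exact (Finset.mem_filter.mp hv).2
                  · simp only [Finset.mem_image] at h
                    obtain ⟨v, hv, rfl⟩ := h
                    rw [← hBV] at hv
                    rw [hB] at hv
                    exact (Finset.mem_filter.mp hv).2
                · apply Finset.Subset.antisymm hKE
                  have e1full : E1 = G.E.image
                      (fun e => insert (2*u+1) (e.image (fun v => 2*v))) := by
                    apply Finset.eq_of_subset_of_card_le Finset.inter_subset_right
                    rw [Finset.card_image_of_injective _ (inj1 u), ← hm1]
                  have e2full : E2 = G.E.image
                      (fun e => insert (2*u) (e.image (fun v => 2*v+1))) := by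
                    apply Finset.eq_of_subset_of_card_le Finset.inter_subset_right
                    rw [Finset.card_image_of_injective _ (inj2 u), ← hm2]
                  show G.E.image (fun e => insert (2*u+1) (e.image (fun v => 2*v))) ∪
                    G.E.image (fun e => insert (2*u) (e.image (fun v => 2*v+1))) ⊆ K.E
                  rw [← e1full, ← e2full, ← hKEeq]
              · -- E2 < m
                have h2' : E2.card < G.E.card :=
                  lt_of_le_of_ne (le_trans hE2le (Finset.card_filter_le _ _)) hm2
                have : ((E2.card : ℚ)) * G.V.card < (G.E.card : ℚ) * B.card := by
                  rw [hbV]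
                  have h2Q : (E2.card : ℚ) < (G.E.card : ℚ) := by exact_mod_cast h2'
                  nlinarith
                nlinarith [key1]
            · have h1' : E1.card < G.E.card :=
                lt_of_le_of_ne (le_trans hE1le (Finset.card_filter_le _ _)) hm1
              have : ((E1.card : ℚ)) * G.V.card < (G.E.card : ℚ) * A.card := by
                rw [haV]
                have h1Q : (E1.card : ℚ) < (G.E.card : ℚ) := by exact_mod_cast h1'
                nlinarith
              nlinarith [key2]
          · -- B proper
            have hBne : B.Nonempty := ⟨u, huB⟩
            have key2' : ((E2.card : ℚ)) * G.V.card < (G.E.card : ℚ) * B.card :=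
              lt_of_le_of_lt
                (mul_le_mul_of_nonneg_right (Nat.cast_le.mpr hE2le : ((E2.card : ℚ)) ≤ ((G.E.filter (fun e => e ⊆ B)).card : ℚ)) (Nat.cast_nonneg G.V.card))
                (subcount_lt G hne hbal B hBsub hBne hBV)
            nlinarith [key1]
        · have hAne : A.Nonempty := ⟨u, huA⟩
          have key1' : ((E1.card : ℚ)) * G.V.card < (G.E.card : ℚ) * A.card :=
            lt_of_le_of_lt
              (mul_le_mul_of_nonneg_right (Nat.cast_le.mpr hE1le : ((E1.card : ℚ)) ≤ ((G.E.filter (fun e => e ⊆ A)).card : ℚ)) (Nat.cast_nonneg G.V.card))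
              (subcount_lt G hne hbal A hAsub hAne hAV)
          nlinarith [key2]
  · -- density
    unfold SUHypergraph.density
    rw [hVcard, hEcard]
    push_cast
    rw [mul_comm (2:ℚ) (G.E.card : ℚ), mul_comm (2:ℚ) (G.V.card : ℚ),
      mul_div_mul_right _ _ (by norm_num : (2:ℚ) ≠ 0)]

end MainStmt0
/-- If there exists a strictly balanced `s`-uniform hypergraph with
density `ρ`, then there exists a strictly balanced `(s+1)`-uniform hypergraph
with the same density `ρ`. -/
theorem stmt0 (s : ℕ) (hs : 2 ≤ s) (ρ : ℚ) (hρ : 0 < ρ)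
    (h : ∃ G : SUHypergraph s, G.StrictlyBalanced ∧ G.density = ρ) :
    ∃ H : SUHypergraph (s + 1), H.StrictlyBalanced ∧ H.density = ρ := by
  obtain ⟨G, hbal, hd⟩ := h
  have hm : 0 < G.E.card := by
    by_contra h0
    push_neg at h0
    have h0' : G.E.card = 0 := Nat.le_zero.mp h0
    rw [show G.density = (G.E.card : ℚ) / (G.V.card : ℚ) from rfl, h0'] at hd
    simp at hd
    rw [← hd] at hρ
    exact lt_irrefl _ hρ
  obtain ⟨H, h1, h2⟩ := double_exists hs G hbal hm
  exact ⟨H, h1, h2.trans hd⟩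
end

section
/- Let s ≥ 3, m ≥ 3, and n = (s−1)m − r with r ∈ {0,1,…,m−1}. Define the s-uniform hypergraph G on vertex set Z/nZ with m edges constructed sequentially as follows: the first edge is {1,…,s}; if the k-th edge is {x, x+1, …, x+s−1}, then the (k+1)-st edge is {x+s−2, …, x+2s−3} if k+1 ∈ I and {x+s−1, …, x+2s−2} otherwise, where I = {⌊k·m/r⌋ : k = 1,…,r}. Then G is strictly balanced with density m/n. -/
open scoped Classical

open SUHypergraph

/-- The index set `I = {⌊k·m/r⌋ : k = 1,…,r}` (empty when `r = 0`). -/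
def Iset (m r : ℕ) : Finset ℕ := (Finset.Icc 1 r).image (fun k => k * m / r)

/-- Starting vertex of the `k`-th edge (`0`-indexed) of the circular
construction: the first edge starts at `1`, and each subsequent edge starts
`s-2` further if its (1-indexed) number lies in `I`, else `s-1` further. -/
def circStart (I : Finset ℕ) (s : ℕ) : ℕ → ℕ
  | 0 => 1
  | k + 1 => circStart I s k + (if k + 2 ∈ I then s - 2 else s - 1)

/-- The `k`-th edge (`0`-indexed) of the circular construction: `s`
consecutive vertices modulo `n` starting at `circStart I s k`. -/
def circEdge (I : Finset ℕ) (s n k : ℕ) : Finset ℕ :=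
  (Finset.range s).image (fun j => (circStart I s k + j) % n)



namespace Stmt7Aux

/-- mark of the `p`-th gap (periodic in `p` with period `m`). -/
def mmu (m r p : ℕ) : ℕ := if (p + 1) % m + 1 ∈ Iset m r then 1 else 0

/-- number of elements of `I` that are `≤ v` (for `v < m`). -/
def Fc (m r v : ℕ) : ℕ := ((Finset.Icc 1 r).filter (fun k => k * m / r ≤ v)).card

/-- global (periodized) counting function. -/
def Gc (m r w : ℕ) : ℕ := r * (w / m) + Fc m r (w % m)

lemma mmu_le_one (m r p : ℕ) : mmu m r p ≤ 1 := by
  unfold mmu; split <;> omega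

lemma mmu_mod (m r p : ℕ) (hm : 0 < m) : mmu m r p = mmu m r (p % m) := by
  unfold mmu
  rw [Nat.mod_add_mod]

lemma mem_Iset {m r q : ℕ} : q ∈ Iset m r ↔ ∃ k, 1 ≤ k ∧ k ≤ r ∧ k * m / r = q := by
  simp [Iset, Finset.mem_image, Finset.mem_Icc, and_assoc]

lemma div_strict_mono {m r k k' : ℕ} (hr : r < m) (hr0 : 1 ≤ r) (hk : 1 ≤ k)
    (hkk : k < k') : k * m / r < k' * m / r := by
  have h1 : 1 ≤ m / r := (Nat.one_le_div_iff (by omega)).mpr (by omega)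
  have h2 : k * m / r + m / r ≤ (k * m + m) / r := by
    rw [Nat.le_div_iff_mul_le (by omega : 0 < r)]
    have := Nat.div_mul_le_self (k * m) r
    have := Nat.div_mul_le_self m r
    nlinarith
  have h3 : (k * m + m) / r ≤ k' * m / r := by
    apply Nat.div_le_div_right
    nlinarith
  omega

lemma Fc_zero (m r : ℕ) (hr : r < m) : Fc m r 0 = 0 := by
  unfold Fc
  rw [Finset.card_eq_zero, Finset.filter_eq_empty_iff]
  intro k hk
  simp only [Finset.mem_Icc] at hk
  have : 1 ≤ k * m / r := by
    rw [Nat.one_le_div_iff (by omega)]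
    nlinarith
  omega

lemma Fc_succ (m r : ℕ) (hr : r < m) (v : ℕ) :
    Fc m r (v + 1) = Fc m r v + (if v + 1 ∈ Iset m r then 1 else 0) := by
  classical
  unfold Fc
  have hsplit : (Finset.Icc 1 r).filter (fun k => k * m / r ≤ v + 1)
      = (Finset.Icc 1 r).filter (fun k => k * m / r ≤ v)
        ∪ (Finset.Icc 1 r).filter (fun k => k * m / r = v + 1) := by
    rw [← Finset.filter_or]
    apply Finset.filter_congr
    intro k _
    constructor
    · intro h; omega
    · intro h; omega
  rw [hsplit, Finset.card_union_of_disjoint]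
  · congr 1
    split
    · rename_i hmem
      obtain ⟨k0, hk01, hk0r, hk0⟩ := mem_Iset.mp hmem
      rw [Finset.card_eq_one]
      refine ⟨k0, ?_⟩
      ext k
      simp only [Finset.mem_filter, Finset.mem_Icc, Finset.mem_singleton]
      constructor
      · rintro ⟨⟨h1, h2⟩, h3⟩
        by_contra hne
        rcases Nat.lt_or_ge k k0 with h | h
        · have := div_strict_mono hr (by omega) h1 h
          omega
        · have := div_strict_mono hr (by omega) hk01 (by omega : k0 < k)
          omega
      · rintro rfl
        exact ⟨⟨hk01, hk0r⟩, hk0⟩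
    · rename_i hmem
      rw [Finset.card_eq_zero, Finset.filter_eq_empty_iff]
      intro k hk hkv
      exact hmem (mem_Iset.mpr ⟨k, (Finset.mem_Icc.mp hk).1, (Finset.mem_Icc.mp hk).2, hkv⟩)
  · rw [Finset.disjoint_left]
    intro a ha hb
    simp only [Finset.mem_filter] at ha hb
    omega

lemma Fc_le (m r v : ℕ) : Fc m r v ≤ r := by
  unfold Fc
  calc _ ≤ (Finset.Icc 1 r).card := Finset.card_filter_le _ _
  _ = r := by rw [Nat.card_Icc]; omega

lemma Fc_m1 (m r : ℕ) (hr : r < m) (hr0 : 1 ≤ r) : Fc m r (m - 1) = r - 1 := by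
  unfold Fc
  have : (Finset.Icc 1 r).filter (fun k => k * m / r ≤ m - 1) = Finset.Icc 1 (r - 1) := by
    ext k
    simp only [Finset.mem_filter, Finset.mem_Icc]
    constructor
    · rintro ⟨⟨h1, h2⟩, h3⟩
      refine ⟨h1, ?_⟩
      by_contra h
      have hk : k = r := by omega
      rw [hk, Nat.mul_div_cancel_left m (by omega : 0 < r)] at h3
      omega
    · rintro ⟨h1, h2⟩
      refine ⟨⟨h1, by omega⟩, ?_⟩
      have : k * m / r < m := by
        rw [Nat.div_lt_iff_lt_mul (by omega : 0 < r)]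
        have hkr : k + 1 ≤ r := by omega
        have h6 : (k + 1) * m ≤ r * m := Nat.mul_le_mul_right m hkr
        nlinarith
      omega
  rw [this, Nat.card_Icc]
  omega

-- chunk 2
lemma Fc_eq_K (m r v : ℕ) (hr : r < m) (hr0 : 1 ≤ r) (hv : v < m) :
    Fc m r v = ((v + 1) * r - 1) / m := by
  set K := ((v + 1) * r - 1) / m with hK
  have hm0 : 0 < m := by omega
  have hvr : 0 < (v + 1) * r := Nat.mul_pos (by omega) (by omega)
  have hKr : K < r := by
    rw [hK, Nat.div_lt_iff_lt_mul hm0]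
    have h1 : (v + 1) * r ≤ m * r := Nat.mul_le_mul_right r (by omega)
    have h2 : m * r = r * m := Nat.mul_comm m r
    omega
  unfold Fc
  have hset : (Finset.Icc 1 r).filter (fun k => k * m / r ≤ v) = Finset.Icc 1 K := by
    ext k
    simp only [Finset.mem_filter, Finset.mem_Icc]
    have hiff : 1 ≤ k → (k * m / r ≤ v ↔ k ≤ K) := by
      intro hk1
      have e1 : k * m / r ≤ v ↔ k * m < (v + 1) * r := by
        rw [← Nat.lt_succ_iff, Nat.div_lt_iff_lt_mul (by omega : 0 < r)]
      have e2 : k ≤ K ↔ k * m ≤ (v + 1) * r - 1 := by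
        rw [hK, Nat.le_div_iff_mul_le hm0]
      omega
    constructor
    · rintro ⟨⟨h1, h2⟩, h3⟩
      exact ⟨h1, (hiff h1).mp h3⟩
    · rintro ⟨h1, h2⟩
      exact ⟨⟨h1, by omega⟩, (hiff h1).mpr h2⟩
  rw [hset, Nat.card_Icc, Nat.add_sub_cancel]

lemma Fc_bounds (m r v : ℕ) (hr : r < m) (hr0 : 1 ≤ r) (hv : v < m) :
    m * Fc m r v + 1 ≤ (v + 1) * r ∧ (v + 1) * r ≤ m * Fc m r v + m := by
  rw [Fc_eq_K m r v hr hr0 hv]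
  have hm0 : 0 < m := by omega
  have hvr : 0 < (v + 1) * r := Nat.mul_pos (by omega) (by omega)
  set X := (v + 1) * r - 1 with hX
  set K := X / m with hK
  have f1 : K * m ≤ X := Nat.div_mul_le_self X m
  have f2 := Nat.div_add_mod X m
  rw [← hK] at f2
  have f3 := Nat.mod_lt X hm0
  have f4 : m * K = K * m := Nat.mul_comm _ _
  have hX1 : X + 1 = (v + 1) * r := by rw [hX]; omega
  constructor
  · omega
  · omega

lemma Gc_bounds (m r w : ℕ) (hr : r < m) (hr0 : 1 ≤ r) :
    m * Gc m r w + 1 ≤ (w + 1) * r ∧ (w + 1) * r ≤ m * Gc m r w + m := by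
  have hm0 : 0 < m := by omega
  obtain ⟨q, u, hu, rfl⟩ : ∃ q u, u < m ∧ w = m * q + u :=
    ⟨w / m, w % m, Nat.mod_lt _ hm0, (Nat.div_add_mod w m).symm⟩
  have hdiv : (m * q + u) / m = q := by
    rw [Nat.mul_add_div hm0, Nat.div_eq_of_lt hu]; omega
  have hmod : (m * q + u) % m = u := by
    rw [Nat.mul_add_mod, Nat.mod_eq_of_lt hu]
  obtain ⟨b1, b2⟩ := Fc_bounds m r u hr hr0 hu
  unfold Gc
  rw [hdiv, hmod]
  have hexp : m * (r * q + Fc m r u) = m * q * r + m * Fc m r u := by ring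
  have hwr : (m * q + u + 1) * r = m * q * r + (u + 1) * r := by ring
  constructor
  · rw [hexp, hwr]; omega
  · rw [hexp, hwr]; omega

lemma succ_mod_div (m x : ℕ) (hm : 0 < m) (h : x % m + 1 < m) :
    (x + 1) % m = x % m + 1 ∧ (x + 1) / m = x / m := by
  obtain ⟨q, u, hu, rfl⟩ : ∃ q u, u < m ∧ x = m * q + u :=
    ⟨x / m, x % m, Nat.mod_lt _ hm, (Nat.div_add_mod x m).symm⟩
  have hmod : (m * q + u) % m = u := by rw [Nat.mul_add_mod, Nat.mod_eq_of_lt hu]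
  have hdiv : (m * q + u) / m = q := by rw [Nat.mul_add_div hm, Nat.div_eq_of_lt hu]; omega
  rw [hmod] at h
  have hmod1 : (m * q + u + 1) % m = u + 1 := by
    rw [Nat.add_assoc, Nat.mul_add_mod, Nat.mod_eq_of_lt h]
  have hdiv1 : (m * q + u + 1) / m = q := by
    rw [Nat.add_assoc, Nat.mul_add_div hm, Nat.div_eq_of_lt h]; omega
  exact ⟨by rw [hmod1, hmod], by rw [hdiv1, hdiv]⟩

lemma wrap_mod_div (m x : ℕ) (hm : 0 < m) (h : x % m + 1 = m) :
    (x + 1) % m = 0 ∧ (x + 1) / m = x / m + 1 := by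
  obtain ⟨q, u, hu, rfl⟩ : ∃ q u, u < m ∧ x = m * q + u :=
    ⟨x / m, x % m, Nat.mod_lt _ hm, (Nat.div_add_mod x m).symm⟩
  have hmod : (m * q + u) % m = u := by rw [Nat.mul_add_mod, Nat.mod_eq_of_lt hu]
  have hdiv : (m * q + u) / m = q := by rw [Nat.mul_add_div hm, Nat.div_eq_of_lt hu]; omega
  rw [hmod] at h
  have hx1 : m * q + u + 1 = m * (q + 1) := by
    have : m * (q + 1) = m * q + m := by ring
    omega
  rw [hx1, Nat.mul_mod_right, Nat.mul_div_cancel_left _ hm, hdiv]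
  exact ⟨rfl, rfl⟩

-- chunk 3
lemma Iset_zero (m : ℕ) : Iset m 0 = ∅ := by
  unfold Iset
  simp

lemma Gc_succ (m r p : ℕ) (hm : 3 ≤ m) (hr : r < m) :
    Gc m r (p + 2) = Gc m r (p + 1) + mmu m r p := by
  have hm0 : 0 < m := by omega
  rcases Nat.eq_zero_or_pos r with hr0 | hr0
  · subst hr0
    unfold Gc Fc mmu
    simp [Iset_zero]
  · set v := (p + 1) % m with hv
    have hvm : v < m := Nat.mod_lt _ hm0
    have hmmu : mmu m r p = if v + 1 ∈ Iset m r then 1 else 0 := rfl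
    rcases Nat.lt_or_ge (v + 1) m with hcase | hcase
    · -- non-wrap step
      obtain ⟨hmod, hdiv⟩ := succ_mod_div m (p + 1) hm0 (by omega)
      unfold Gc
      rw [show p + 2 = p + 1 + 1 by ring, hmod, hdiv, ← hv, Fc_succ m r hr v, hmmu]
      ring
    · -- wrap step : v = m - 1
      have hveq : v + 1 = m := by omega
      obtain ⟨hmod, hdiv⟩ := wrap_mod_div m (p + 1) hm0 (by omega)
      unfold Gc
      rw [show p + 2 = p + 1 + 1 by ring, hmod, hdiv, ← hv]
      have hmem : v + 1 ∈ Iset m r := by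
        rw [mem_Iset]
        exact ⟨r, hr0, le_refl r, by
          rw [Nat.mul_div_cancel_left m hr0]; omega⟩
      rw [hmmu, if_pos hmem, show v = m - 1 by omega, Fc_m1 m r hr hr0, Fc_zero m r hr]
      have : r * ((p + 1) / m + 1) = r * ((p + 1) / m) + r := by ring
      omega
  
lemma Gc_tel (m r x L : ℕ) (hm : 3 ≤ m) (hr : r < m) :
    Gc m r (x + 1) + (∑ i ∈ Finset.range L, mmu m r (x + i)) = Gc m r (x + L + 1) := by
  induction L with
  | zero => simp
  | succ L ih =>
    rw [Finset.sum_range_succ, ← Nat.add_assoc, ih,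
      show x + (L + 1) + 1 = (x + L) + 2 by ring, Gc_succ m r (x + L) hm hr]

lemma window (m r x L : ℕ) (hm : 3 ≤ m) (hr : r < m) :
    m * (∑ i ∈ Finset.range L, mmu m r (x + i)) + 1 ≤ L * r + m := by
  rcases Nat.eq_zero_or_pos r with hr0 | hr0
  · subst hr0
    have : ∀ i ∈ Finset.range L, mmu m 0 (x + i) = 0 := by
      intro i _
      unfold mmu
      simp [Iset_zero]
    rw [Finset.sum_congr rfl this]
    simp
    omega
  · have htel := Gc_tel m r x L hm hr
    obtain ⟨u1, u2⟩ := Gc_bounds m r (x + 1) hr hr0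
    obtain ⟨v1, v2⟩ := Gc_bounds m r (x + L + 1) hr hr0
    have hmul : m * (Gc m r (x + 1) + (∑ i ∈ Finset.range L, mmu m r (x + i)))
        = m * Gc m r (x + 1) + m * (∑ i ∈ Finset.range L, mmu m r (x + i)) := by ring
    rw [htel] at hmul
    have hr1 : (x + 1 + 1) * r + L * r = (x + L + 1 + 1) * r := by ring
    omega

lemma sum_mmu_period (m r x : ℕ) (hm : 3 ≤ m) (hr : r < m) :
    (∑ i ∈ Finset.range m, mmu m r (x + i)) = r := by
  have htel := Gc_tel m r x m hm hr
  have hm0 : 0 < m := by omega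
  -- Gc (x + m + 1) = Gc (x + 1) + r
  have hkey : Gc m r (x + m + 1) = Gc m r (x + 1) + r := by
    unfold Gc
    have h1 : (x + m + 1) % m = (x + 1) % m := by
      rw [show x + m + 1 = x + 1 + m by ring, Nat.add_mod_right]
    have h2 : (x + m + 1) / m = (x + 1) / m + 1 := by
      rw [show x + m + 1 = x + 1 + m by ring, Nat.add_div_right _ hm0]
    rw [h1, h2]
    ring
  omega

-- chunk 4
/-- lifted (periodic) start function -/
def Alift (s m r n j : ℕ) : ℕ := circStart (Iset m r) s (j % m) + (j / m) * n

lemma circStart_eq (s m r : ℕ) (hs : 3 ≤ s) (hm : 3 ≤ m) (hr : r < m) :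
    ∀ v, v ≤ m - 1 →
      circStart (Iset m r) s v + (∑ p ∈ Finset.range v, mmu m r p) = 1 + v * (s - 1) := by
  intro v
  induction v with
  | zero => intro _; simp [circStart]
  | succ v ih =>
    intro hv
    have hv' : v ≤ m - 1 := by omega
    have hvm : v + 1 < m := by omega
    have hstep : circStart (Iset m r) s (v + 1)
        = circStart (Iset m r) s v + (if v + 2 ∈ Iset m r then s - 2 else s - 1) := rfl
    have hmmu : mmu m r v = if v + 2 ∈ Iset m r then 1 else 0 := by
      unfold mmu
      rw [Nat.mod_eq_of_lt hvm]
    rw [Finset.sum_range_succ, hstep, hmmu]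
    have := ih hv'
    have hmul : (v + 1) * (s - 1) = v * (s - 1) + (s - 1) := by ring
    split <;> omega

lemma circStart_wrap (s m r n : ℕ) (hs : 3 ≤ s) (hm : 3 ≤ m) (hr : r < m)
    (hnr : n + r = (s - 1) * m) :
    circStart (Iset m r) s (m - 1) + (s - 1 - mmu m r (m - 1)) = n + 1 := by
  have h1 := circStart_eq s m r hs hm hr (m - 1) (le_refl _)
  have h2 := sum_mmu_period m r 0 hm hr
  simp only [Nat.zero_add] at h2
  have h3 : (∑ p ∈ Finset.range m, mmu m r p)
      = (∑ p ∈ Finset.range (m - 1), mmu m r p) + mmu m r (m - 1) := by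
    rw [← Finset.sum_range_succ, show m - 1 + 1 = m by omega]
  have h4 := mmu_le_one m r (m - 1)
  have h5 : (m - 1) * (s - 1) + (s - 1) = m * (s - 1) := by
    have hm1 : m - 1 + 1 = m := by omega
    calc (m - 1) * (s - 1) + (s - 1) = (m - 1 + 1) * (s - 1) := by ring
    _ = m * (s - 1) := by rw [hm1]
  have h6 : (s - 1) * m = m * (s - 1) := Nat.mul_comm _ _
  omega

lemma Alift_succ (s m r n j : ℕ) (hs : 3 ≤ s) (hm : 3 ≤ m) (hr : r < m)
    (hnr : n + r = (s - 1) * m) :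
    Alift s m r n (j + 1) = Alift s m r n j + (s - 1 - mmu m r j) := by
  have hm0 : 0 < m := by omega
  have hmmu : mmu m r j = mmu m r (j % m) := mmu_mod m r j hm0
  rcases Nat.lt_or_ge (j % m + 1) m with hcase | hcase
  · obtain ⟨hmod, hdiv⟩ := succ_mod_div m j hm0 hcase
    unfold Alift
    rw [hmod, hdiv]
    have hstep : circStart (Iset m r) s (j % m + 1)
        = circStart (Iset m r) s (j % m) + (if j % m + 2 ∈ Iset m r then s - 2 else s - 1) := rfl
    have hmmu2 : mmu m r (j % m) = if j % m + 2 ∈ Iset m r then 1 else 0 := by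
      unfold mmu
      rw [Nat.mod_eq_of_lt hcase]
    rw [hstep, hmmu, hmmu2]
    split <;> omega
  · have hveq : j % m + 1 = m := by
      have := Nat.mod_lt j hm0
      omega
    obtain ⟨hmod, hdiv⟩ := wrap_mod_div m j hm0 hveq
    have hveq2 : j % m = m - 1 := by omega
    unfold Alift
    rw [hmod, hdiv, hveq2]
    rw [hveq2] at hmmu
    have hw := circStart_wrap s m r n hs hm hr hnr
    have hq : (j / m + 1) * n = (j / m) * n + n := by ring
    simp only [circStart]
    omega

lemma Alift_zero (s m r n : ℕ) : Alift s m r n 0 = 1 := by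
  unfold Alift
  simp [circStart]

lemma Alift_lt_succ (s m r n j : ℕ) (hs : 3 ≤ s) (hm : 3 ≤ m) (hr : r < m)
    (hnr : n + r = (s - 1) * m) : Alift s m r n j < Alift s m r n (j + 1) := by
  rw [Alift_succ s m r n j hs hm hr hnr]
  have := mmu_le_one m r j
  omega

lemma Alift_strictMono (s m r n : ℕ) (hs : 3 ≤ s) (hm : 3 ≤ m) (hr : r < m)
    (hnr : n + r = (s - 1) * m) : StrictMono (Alift s m r n) :=
  strictMono_nat_of_lt_succ (fun j => Alift_lt_succ s m r n j hs hm hr hnr)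

lemma Alift_succ_le (s m r n j : ℕ) (hs : 3 ≤ s) (hm : 3 ≤ m) (hr : r < m)
    (hnr : n + r = (s - 1) * m) :
    Alift s m r n (j + 1) ≤ Alift s m r n j + (s - 1) := by
  rw [Alift_succ s m r n j hs hm hr hnr]
  omega

lemma Alift_add_m (s m r n x : ℕ) (hm : 3 ≤ m) :
    Alift s m r n (x + m) = Alift s m r n x + n := by
  have hm0 : 0 < m := by omega
  unfold Alift
  rw [Nat.add_mod_right, Nat.add_div_right _ hm0]
  ring

lemma Alift_tel (s m r n : ℕ) (hs : 3 ≤ s) (hm : 3 ≤ m) (hr : r < m)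
    (hnr : n + r = (s - 1) * m) (x : ℕ) :
    ∀ t, Alift s m r n (x + t)
      = Alift s m r n x + (∑ i ∈ Finset.range t, (s - 1 - mmu m r (x + i))) := by
  intro t
  induction t with
  | zero => simp
  | succ t ih =>
    rw [← Nat.add_assoc, Alift_succ s m r n (x + t) hs hm hr hnr, ih,
      Finset.sum_range_succ]
    omega

lemma Alift_eq_circStart (s m r n j : ℕ) (hj : j < m) :
    Alift s m r n j = circStart (Iset m r) s j := by
  unfold Alift
  rw [Nat.mod_eq_of_lt hj, Nat.div_eq_of_lt hj]
  simp

lemma Alift_mod (s m r n j : ℕ) :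
    (Alift s m r n j) % n = (circStart (Iset m r) s (j % m)) % n := by
  unfold Alift
  simp [Nat.add_mul_mod_self_right]

-- chunk 5
lemma core (s m r n : ℕ) (hs : 3 ≤ s) (hm : 3 ≤ m) (hr : r < m)
    (hnr : n + r = (s - 1) * m) (x y j : ℕ) (hxy : x + 2 ≤ y) (hjm : j + 2 ≤ m)
    (hjx : j ≤ x) :
    n + 1 + m * (∑ i ∈ Finset.range j, mmu m r (x - j + i))
      ≤ m * min s (Alift s m r n y - Alift s m r n x) + j * r := by
  have htel := Alift_tel s m r n hs hm hr hnr x (y - x)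
  rw [show x + (y - x) = y by omega] at htel
  set SD := ∑ i ∈ Finset.range (y - x), (s - 1 - mmu m r (x + i)) with hSDdef
  have hD : Alift s m r n y - Alift s m r n x = SD := by omega
  rw [hD]
  have hterm : ∀ i, s - 2 ≤ s - 1 - mmu m r (x + i) := by
    intro i
    have := mmu_le_one m r (x + i)
    omega
  have hSD : (y - x) * (s - 2) ≤ SD := by
    calc (y - x) * (s - 2) = ∑ _i ∈ Finset.range (y - x), (s - 2) := by
          rw [Finset.sum_const, Finset.card_range, smul_eq_mul]
    _ ≤ SD := Finset.sum_le_sum (fun i _ => hterm i)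
  have hwin := window m r (x - j) j hm hr
  rcases le_or_gt s SD with hle | hlt
  · rw [min_eq_left hle]
    have hms : m * s = m * (s - 1) + m := by
      have h1 : s - 1 + 1 = s := by omega
      calc m * s = m * ((s - 1) + 1) := by rw [h1]
      _ = m * (s - 1) + m := by ring
    have hc : m * (s - 1) = (s - 1) * m := Nat.mul_comm _ _
    linarith [hwin, hms, hc, hnr]
  · -- special case : s = 3, y = x + 2, both gaps marked
    have h22 : 2 * (s - 2) ≤ (y - x) * (s - 2) :=
      Nat.mul_le_mul_right _ (by omega)
    have hs3 : s = 3 := by omega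
    have ht2 : y - x = 2 := by
      by_contra hne
      have h32 : 3 * (s - 2) ≤ (y - x) * (s - 2) :=
        Nat.mul_le_mul_right _ (by omega)
      omega
    rw [ht2] at hSDdef
    rw [Finset.sum_range_succ, Finset.sum_range_one, Nat.add_zero] at hSDdef
    have hmx := mmu_le_one m r x
    have hmx1 := mmu_le_one m r (x + 1)
    have hmm : mmu m r x = 1 ∧ mmu m r (x + 1) = 1 := by omega
    have hwin2 := window m r (x - j) (j + 2) hm hr
    rw [Finset.sum_range_succ, Finset.sum_range_succ,
      show x - j + j = x by omega, show x - j + (j + 1) = x + 1 by omega] at hwin2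
    rw [hmm.1, hmm.2] at hwin2
    have hmin : min s SD = 2 := by omega
    rw [hmin]
    have he1 : m * ((∑ i ∈ Finset.range j, mmu m r (x - j + i)) + 1 + 1)
        = m * (∑ i ∈ Finset.range j, mmu m r (x - j + i)) + m + m := by ring
    have he2 : (j + 2) * r = j * r + r + r := by ring
    have hc : (s - 1) * m = 2 * m := by rw [hs3]
    linarith [hwin2, he1, he2, hc, hnr]

lemma aux_sum (s m r n : ℕ) (hs : 3 ≤ s) (hm : 3 ≤ m) (hr : r < m)
    (hnr : n + r = (s - 1) * m) :
    ∀ c, 1 ≤ c → ∀ (e : ℕ → ℕ) (j : ℕ),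
      (∀ i, i < c → e i < e (i + 1)) → (e (c - 1) + 2 ≤ e c) →
      (j + c + 1 ≤ m) → (j ≤ e 0) →
      c * n + 1 + m * (∑ i ∈ Finset.range j, mmu m r (e 0 - j + i))
        ≤ m * (∑ l ∈ Finset.range c,
            min s (Alift s m r n (e (l + 1)) - Alift s m r n (e l))) + j * r := by
  intro c
  induction c with
  | zero => omega
  | succ c ih =>
    intro _ e j hmono hfin hjm hjx
    rcases Nat.eq_zero_or_pos c with rfl | hc
    · -- single stretch
      have hfin' : e 0 + 2 ≤ e 1 := hfin
      have hcore := core s m r n hs hm hr hnr (e 0) (e 1) j hfin' (by omega) hjx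
      simp only [Nat.zero_add, Finset.sum_range_one, one_mul]
      exact hcore
    · have hfin' : e c + 2 ≤ e (c + 1) := by
        have : c + 1 - 1 = c := by omega
        rwa [this] at hfin
      have hsplit : (∑ l ∈ Finset.range (c + 1),
            min s (Alift s m r n (e (l + 1)) - Alift s m r n (e l)))
          = (∑ l ∈ Finset.range c,
              min s (Alift s m r n (e (l + 1 + 1)) - Alift s m r n (e (l + 1))))
            + min s (Alift s m r n (e 1) - Alift s m r n (e 0)) :=
        Finset.sum_range_succ' _ c
      by_cases hsing : e 1 = e 0 + 1
      · -- first stretch is a singleton inside a run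
        have ihh := ih hc (fun l => e (l + 1)) (j + 1)
          (fun i hi => hmono (i + 1) (by omega))
          (by
            show e (c - 1 + 1) + 2 ≤ e (c + 1)
            rw [show c - 1 + 1 = c by omega]
            exact hfin')
          (by omega) (by show j + 1 ≤ e 1; omega)
        have hconv : (∑ l ∈ Finset.range c,
              min s (Alift s m r n ((fun l => e (l + 1)) (l + 1))
                - Alift s m r n ((fun l => e (l + 1)) l)))
            = (∑ l ∈ Finset.range c,
              min s (Alift s m r n (e (l + 1 + 1)) - Alift s m r n (e (l + 1)))) := rfl
        rw [hconv] at ihh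
        -- base point of marks window
        have hbase : e 1 - (j + 1) = e 0 - j := by omega
        rw [hbase] at ihh
        rw [Finset.sum_range_succ, show e 0 - j + j = e 0 by omega] at ihh
        -- first contribution
        have hA := Alift_succ s m r n (e 0) hs hm hr hnr
        have hmmu := mmu_le_one m r (e 0)
        have hD0 : Alift s m r n (e 1) - Alift s m r n (e 0) = s - 1 - mmu m r (e 0) := by
          rw [hsing, hA]; omega
        have hminD : min s (s - 1 - mmu m r (e 0)) = s - 1 - mmu m r (e 0) := by omega
        rw [hsplit, hD0, hminD]
        -- arithmetic
        have he1 : ∀ a b : ℕ, m * (a + b) = m * a + m * b := fun a b => by ring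
        have he2 : (c + 1) * n = c * n + n := by ring
        have he3 : (j + 1) * r = j * r + r := by ring
        have he4 : m * (s - 1 - mmu m r (e 0)) + m * mmu m r (e 0) = (s - 1) * m := by
          calc m * (s - 1 - mmu m r (e 0)) + m * mmu m r (e 0)
              = m * ((s - 1 - mmu m r (e 0)) + mmu m r (e 0)) := by ring
          _ = m * (s - 1) := by rw [show (s - 1 - mmu m r (e 0)) + mmu m r (e 0) = s - 1 by omega]
          _ = (s - 1) * m := Nat.mul_comm _ _
        rw [he1] at ihh ⊢
        linarith [ihh, he2, he3, he4, hnr]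
      · -- first stretch is a real jump
        have h2 : e 0 + 2 ≤ e 1 := by
          have := hmono 0 (by omega)
          simp only [Nat.zero_add] at this
          omega
        have hcore := core s m r n hs hm hr hnr (e 0) (e 1) j h2 (by omega) hjx
        have ihh := ih hc (fun l => e (l + 1)) 0
          (fun i hi => hmono (i + 1) (by omega))
          (by
            show e (c - 1 + 1) + 2 ≤ e (c + 1)
            rw [show c - 1 + 1 = c by omega]
            exact hfin')
          (by omega) (by omega)
        have hconv : (∑ l ∈ Finset.range c,
              min s (Alift s m r n ((fun l => e (l + 1)) (l + 1))
                - Alift s m r n ((fun l => e (l + 1)) l)))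
            = (∑ l ∈ Finset.range c,
              min s (Alift s m r n (e (l + 1 + 1)) - Alift s m r n (e (l + 1)))) := rfl
        rw [hconv] at ihh
        simp only [Finset.range_zero, Finset.sum_empty, Nat.mul_zero, Nat.add_zero,
          Nat.zero_mul] at ihh
        rw [hsplit]
        have he1 : ∀ a b : ℕ, m * (a + b) = m * a + m * b := fun a b => by ring
        have he2 : (c + 1) * n = c * n + n := by ring
        rw [he1]
        linarith [ihh, hcore, he2]

-- chunk 6
lemma mod_window_inj (n c x y : ℕ) (hn : 0 < n) (hx1 : c ≤ x) (hx2 : x < c + n)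
    (hy1 : c ≤ y) (hy2 : y < c + n) (h : x % n = y % n) : x = y := by
  have key : ∀ a b : ℕ, a ≤ b → c ≤ a → b < c + n → a % n = b % n → a = b := by
    intro a b hle _ hb heq
    have hd : n ∣ b - a := (Nat.modEq_iff_dvd' hle).mp heq
    rcases hd with ⟨k, hk⟩
    rcases Nat.eq_zero_or_pos k with rfl | hk0
    · omega
    · have : n ≤ n * k := Nat.le_mul_of_pos_right n hk0
      omega
  rcases Nat.le_total x y with hle | hle
  · exact key x y hle hx1 hy2 h
  · exact (key y x hle hy1 hx2 h.symm).symm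

lemma image_mod_card (n c t : ℕ) (hn : 0 < n) (ht : t ≤ n) :
    ((Finset.range t).image (fun i => (c + i) % n)).card = t := by
  rw [Finset.card_image_of_injOn, Finset.card_range]
  intro i hi i' hi' hh
  simp only [Finset.coe_range, Set.mem_Iio] at hi hi'
  have := mod_window_inj n c (c + i) (c + i') hn (by omega) (by omega) (by omega)
    (by omega) hh
  omega

lemma interval_mod_ne (s n a b : ℕ) (hsn : s + 1 ≤ n) (hs : 1 ≤ s) (ha : 1 ≤ a)
    (hab : a < b) (hb : b ≤ n) :
    (Finset.range s).image (fun i => (a + i) % n)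
      ≠ (Finset.range s).image (fun i => (b + i) % n) := by
  have hn : 0 < n := by omega
  intro heq
  have hbmem : b % n ∈ (Finset.range s).image (fun i => (a + i) % n) := by
    rw [heq]
    exact Finset.mem_image.mpr ⟨0, Finset.mem_range.mpr (by omega), by rw [Nat.add_zero]⟩
  obtain ⟨i, hi, hieq⟩ := Finset.mem_image.mp hbmem
  rw [Finset.mem_range] at hi
  have hi2 : a + i = b := mod_window_inj n a (a + i) b hn (by omega) (by omega)
    (by omega) (by omega) hieq
  have hb1mem : (b - 1) % n ∈ (Finset.range s).image (fun i => (b + i) % n) := by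
    rw [← heq]
    refine Finset.mem_image.mpr ⟨b - 1 - a, Finset.mem_range.mpr (by omega), ?_⟩
    rw [show a + (b - 1 - a) = b - 1 by omega]
  obtain ⟨i', hi', hieq'⟩ := Finset.mem_image.mp hb1mem
  rw [Finset.mem_range] at hi'
  have h3 : (b - 1 + n) % n = (b - 1) % n := Nat.add_mod_right _ _
  have hi3 : b + i' = b - 1 + n := mod_window_inj n b (b + i') (b - 1 + n) hn (by omega)
    (by omega) (by omega) (by omega) (by rw [h3]; exact hieq')
  omega

lemma Alift_ge_one (s m r n : ℕ) (hs : 3 ≤ s) (hm : 3 ≤ m) (hr : r < m)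
    (hnr : n + r = (s - 1) * m) (j : ℕ) : 1 ≤ Alift s m r n j := by
  have := (Alift_strictMono s m r n hs hm hr hnr).monotone (Nat.zero_le j)
  rw [Alift_zero] at this
  exact this

lemma Alift_le_n (s m r n : ℕ) (hs : 3 ≤ s) (hm : 3 ≤ m) (hr : r < m)
    (hnr : n + r = (s - 1) * m) (j : ℕ) (hj : j < m) : Alift s m r n j ≤ n := by
  have h1 : Alift s m r n j < Alift s m r n m :=
    (Alift_strictMono s m r n hs hm hr hnr) hj
  have h2 : Alift s m r n m = 1 + n := by
    have := Alift_add_m s m r n 0 hm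
    rw [Nat.zero_add, Alift_zero] at this
    omega
  omega

lemma circEdge_eq_image (s m r n j : ℕ) (hj : j < m) :
    circEdge (Iset m r) s n j = (Finset.range s).image (fun i => (Alift s m r n j + i) % n) := by
  unfold circEdge
  rw [Alift_eq_circStart s m r n j hj]

lemma circEdge_card (s m r n j : ℕ) (hs : 3 ≤ s) (hm : 3 ≤ m) (hr : r < m)
    (hnr : n + r = (s - 1) * m) (hsn : s + 1 ≤ n) (hj : j < m) :
    (circEdge (Iset m r) s n j).card = s := by
  rw [circEdge_eq_image s m r n j hj]
  exact image_mod_card n _ s (by omega) (by omega)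

lemma circEdge_injOn (s m r n : ℕ) (hs : 3 ≤ s) (hm : 3 ≤ m) (hr : r < m)
    (hnr : n + r = (s - 1) * m) (hsn : s + 1 ≤ n) :
    ∀ j < m, ∀ j' < m, circEdge (Iset m r) s n j = circEdge (Iset m r) s n j' → j = j' := by
  have key : ∀ j j', j < m → j' < m → j < j' →
      circEdge (Iset m r) s n j ≠ circEdge (Iset m r) s n j' := by
    intro j j' hj hj' hlt
    rw [circEdge_eq_image s m r n j hj, circEdge_eq_image s m r n j' hj']
    exact interval_mod_ne s n _ _ hsn (by omega)
      (Alift_ge_one s m r n hs hm hr hnr j)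
      ((Alift_strictMono s m r n hs hm hr hnr) hlt)
      (Alift_le_n s m r n hs hm hr hnr j' hj')
  intro j hj j' hj' heq
  rcases Nat.lt_trichotomy j j' with h | h | h
  · exact absurd heq (key j j' hj hj' h)
  · exact h
  · exact absurd heq.symm (key j' j hj' hj h)

lemma exists_between (s m r n : ℕ) (hs : 3 ≤ s) (hm : 3 ≤ m) (hr : r < m)
    (hnr : n + r = (s - 1) * m) :
    ∀ t w, 1 ≤ w → w < Alift s m r n t →
      ∃ j, j < t ∧ Alift s m r n j ≤ w ∧ w < Alift s m r n (j + 1) := by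
  intro t
  induction t with
  | zero =>
    intro w h1 h2
    rw [Alift_zero] at h2
    omega
  | succ t ih =>
    intro w h1 h2
    rcases Nat.lt_or_ge w (Alift s m r n t) with hlt | hge
    · obtain ⟨j, hj1, hj2, hj3⟩ := ih w h1 hlt
      exact ⟨j, by omega, hj2, hj3⟩
    · exact ⟨t, by omega, hge, h2⟩

lemma cover (s m r n : ℕ) (hs : 3 ≤ s) (hm : 3 ≤ m) (hr : r < m)
    (hnr : n + r = (s - 1) * m) (hsn : s + 1 ≤ n) (v : ℕ) (hv : v < n) :
    ∃ j, j < m ∧ v ∈ circEdge (Iset m r) s n j := by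
  set w := if v = 0 then n else v with hw
  have hw1 : 1 ≤ w := by rw [hw]; split <;> omega
  have hwn : w ≤ n := by rw [hw]; split <;> omega
  have hAm : Alift s m r n m = 1 + n := by
    have := Alift_add_m s m r n 0 hm
    rw [Nat.zero_add, Alift_zero] at this
    omega
  obtain ⟨j, hj1, hj2, hj3⟩ := exists_between s m r n hs hm hr hnr m w hw1 (by omega)
  have hstep := Alift_succ s m r n j hs hm hr hnr
  have hmmu := mmu_le_one m r j
  refine ⟨j, hj1, ?_⟩
  rw [circEdge_eq_image s m r n j hj1]
  refine Finset.mem_image.mpr ⟨w - Alift s m r n j, Finset.mem_range.mpr (by omega), ?_⟩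
  rw [show Alift s m r n j + (w - Alift s m r n j) = w by omega, hw]
  split
  · rename_i h; rw [h, Nat.mod_self]
  · exact Nat.mod_eq_of_lt hv

-- chunk 7
lemma Alift_mod_add (s m r n j i : ℕ) (hm0 : 0 < m) :
    (Alift s m r n (j % m) + i) % n = (Alift s m r n j + i) % n := by
  unfold Alift
  rw [Nat.mod_eq_of_lt (Nat.mod_lt j hm0), Nat.div_eq_of_lt (Nat.mod_lt j hm0)]
  rw [show circStart (Iset m r) s (j % m) + j / m * n + i
    = circStart (Iset m r) s (j % m) + 0 * n + i + (j / m) * n by ring]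
  rw [Nat.add_mul_mod_self_right]


end Stmt7Aux
open Stmt7Aux

/-- the circular construction with `s ≥ 3`, `m ≥ 3`,
`n = (s-1)m - r`, `0 ≤ r < m` is strictly balanced with density `m/n`. -/
theorem stmt7 (s m r n : ℕ) (hs : 3 ≤ s) (hm : 3 ≤ m) (hr : r < m)
    (hn : n = (s - 1) * m - r)
    (G : SUHypergraph s) (hV : G.V = Finset.range n)
    (hE : G.E = (Finset.range m).image (circEdge (Iset m r) s n)) :
    G.StrictlyBalanced ∧ G.density = (m : ℚ) / (n : ℚ) := by
  classical
  have hm0 : 0 < m := by omega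
  have hprod : m ≤ (s - 1) * m := Nat.le_mul_of_pos_left m (by omega)
  have hnr : n + r = (s - 1) * m := by
    generalize (s - 1) * m = c1 at hn hprod
    omega
  have hs2m : (s - 2) * 3 ≤ (s - 2) * m := Nat.mul_le_mul_left _ hm
  have hsplitprod : (s - 1) * m = (s - 2) * m + m := by
    have h1 : s - 1 = (s - 2) + 1 := by omega
    calc (s - 1) * m = ((s - 2) + 1) * m := by rw [← h1]
    _ = (s - 2) * m + m := by ring
  have hsn : s + 1 ≤ n := by
    have h1 := hs2m
    have h2 := hsplitprod
    have h3 := hnr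
    generalize (s - 2) * m = c2 at h1 h2
    generalize (s - 1) * m = c1 at h2 h3
    omega
  have hn0 : 0 < n := by omega
  have hinj : Set.InjOn (circEdge (Iset m r) s n) ↑(Finset.range m) := by
    intro a ha b hb heq
    simp only [Finset.coe_range, Set.mem_Iio] at ha hb
    exact circEdge_injOn s m r n hs hm hr hnr hsn a ha b hb heq
  have hEcard : G.E.card = m := by
    rw [hE, Finset.card_image_of_injOn hinj, Finset.card_range]
  have hVcard : G.V.card = n := by rw [hV, Finset.card_range]
  have hdens : G.density = (m : ℚ) / (n : ℚ) := by
    unfold SUHypergraph.density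
    rw [hEcard, hVcard]
  refine ⟨⟨?_, ?_⟩, hdens⟩
  · rw [hV]
    exact Finset.nonempty_range_iff.mpr (by omega)
  · intro H hHV hHE hHne hnot
    set T := (Finset.range m).filter (fun j => circEdge (Iset m r) s n j ∈ H.E) with hT
    have hTsub : T ⊆ Finset.range m := Finset.filter_subset _ _
    have hTm : ∀ a ∈ T, a < m := fun a ha => Finset.mem_range.mp (hTsub ha)
    have hHET : H.E = T.image (circEdge (Iset m r) s n) := by
      ext f
      constructor
      · intro hf
        have hf2 : f ∈ G.E := hHE hf
        rw [hE] at hf2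
        obtain ⟨j, hj, rfl⟩ := Finset.mem_image.mp hf2
        rw [Finset.mem_range] at hj
        exact Finset.mem_image.mpr ⟨j, Finset.mem_filter.mpr
          ⟨Finset.mem_range.mpr hj, hf⟩, rfl⟩
      · intro hf
        obtain ⟨j, hj, rfl⟩ := Finset.mem_image.mp hf
        exact (Finset.mem_filter.mp hj).2
    have hHEcard : H.E.card = T.card := by
      rw [hHET, Finset.card_image_of_injOn (hinj.mono (Finset.coe_subset.mpr hTsub))]
    by_cases hTall : T = Finset.range m
    · exfalso
      apply hnot
      have hEeq : H.E = G.E := by rw [hHET, hTall, hE]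
      refine ⟨?_, hEeq⟩
      apply Finset.Subset.antisymm hHV
      rw [hV]
      intro v hv
      rw [Finset.mem_range] at hv
      obtain ⟨j, hj, hvj⟩ := cover s m r n hs hm hr hnr hsn v hv
      apply H.edges_sub (circEdge (Iset m r) s n j) _ hvj
      rw [hEeq, hE]
      exact Finset.mem_image.mpr ⟨j, Finset.mem_range.mpr hj, rfl⟩
    have hTcard_lt : T.card < m := by
      have hle : T.card ≤ m := by
        calc T.card ≤ (Finset.range m).card := Finset.card_le_card hTsub
        _ = m := Finset.card_range m
      rcases Nat.lt_or_ge T.card m with h | h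
      · exact h
      · exact absurd (Finset.eq_of_subset_of_card_le hTsub
          (by rw [Finset.card_range]; omega)) hTall
    by_cases hT0 : T.card = 0
    · have hHE0 : H.E = ∅ := by
        rw [hHET, Finset.card_eq_zero.mp hT0]
        simp
      have h0 : H.density = 0 := by
        unfold SUHypergraph.density
        rw [hHE0]
        simp
      rw [h0, hdens]
      exact div_pos (by exact_mod_cast hm0) (by exact_mod_cast hn0)
    have hk1 : 1 ≤ T.card := by omega
    -- main counting bound
    have hmain : T.card * n < m * H.V.card := by
      obtain ⟨p, hpmem, hpT⟩ : ∃ p, p ∈ Finset.range m ∧ p ∉ T := by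
        by_contra hcon
        push_neg at hcon
        exact hTall (Finset.Subset.antisymm hTsub (fun x hx => hcon x hx))
      rw [Finset.mem_range] at hpmem
      set lift : ℕ → ℕ := fun j => if j ≤ p then j + m else j with hlift
      have hliftinj : Set.InjOn lift ↑T := by
        intro a ha b hb heq
        have ha' := hTm a ha
        have hb' := hTm b hb
        simp only [hlift] at heq
        split_ifs at heq <;> omega
      set T' := T.image lift with hT'
      have hT'card : T'.card = T.card := Finset.card_image_of_injOn hliftinj
      have hT'mem : ∀ y ∈ T', p < y ∧ y < p + m ∧ y % m ∈ T := by
        intro y hy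
        obtain ⟨j, hj, rfl⟩ := Finset.mem_image.mp hy
        have hjm := hTm j hj
        have hjp : j ≠ p := fun h => hpT (h ▸ hj)
        simp only [hlift]
        split_ifs with hcase
        · refine ⟨by omega, by omega, ?_⟩
          rwa [Nat.add_mod_right, Nat.mod_eq_of_lt hjm]
        · refine ⟨by omega, by omega, ?_⟩
          rwa [Nat.mod_eq_of_lt hjm]
      set k := T.card with hk
      have ho : T'.card = k := by rw [hT'card]
      set o := T'.orderIsoOfFin ho with hodef
      set e : ℕ → ℕ := fun l => if hl : l < k then (o ⟨l, hl⟩ : ℕ)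
        else (o ⟨0, by omega⟩ : ℕ) + m with he
      have heT' : ∀ l, ∀ hl : l < k, e l ∈ T' := by
        intro l hl
        simp only [he, dif_pos hl]
        exact (o ⟨l, hl⟩).2
      have hek : e k = e 0 + m := by
        simp only [he, dif_neg (lt_irrefl k), dif_pos (show 0 < k by omega)]
      have hemono : ∀ i, i < k → e i < e (i + 1) := by
        intro i hi
        by_cases h2 : i + 1 < k
        · simp only [he, dif_pos hi, dif_pos h2]
          have hlt : (⟨i, hi⟩ : Fin k) < ⟨i + 1, h2⟩ := by
            rw [Fin.mk_lt_mk]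
            omega
          exact Subtype.coe_lt_coe.mpr (o.lt_iff_lt.mpr hlt)
        · have hik : i + 1 = k := by omega
          have hb1 := (hT'mem _ (heT' i hi)).2.1
          have hb2 := (hT'mem _ (heT' 0 (by omega))).1
          rw [hik, hek]
          omega
      have hfinal : e (k - 1) + 2 ≤ e k := by
        have hb1 := (hT'mem _ (heT' (k - 1) (by omega))).2.1
        have hb2 := (hT'mem _ (heT' 0 (by omega))).1
        rw [hek]
        omega
      have hchain : ∀ b, b ≤ k → ∀ a, a < b → e a < e b := by
        intro b
        induction b with
        | zero => intro _ a ha; omega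
        | succ b ih =>
          intro hbk a ha
          rcases Nat.lt_or_ge a b with h | h
          · exact lt_trans (ih (by omega) a h) (hemono b (by omega))
          · have hab : a = b := by omega
            rw [hab]
            exact hemono b (by omega)
      -- lower bound on |H.V|
      have hAmono := Alift_strictMono s m r n hs hm hr hnr
      have hAek : Alift s m r n (e k) = Alift s m r n (e 0) + n := by
        rw [hek]
        exact Alift_add_m s m r n (e 0) hm
      have hminle : ∀ l, min s (Alift s m r n (e (l + 1)) - Alift s m r n (e l)) ≤ s :=
        fun l => Nat.min_le_left _ _
      have hmem_window : ∀ l, l < k → ∀ i,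
          i < min s (Alift s m r n (e (l + 1)) - Alift s m r n (e l)) →
          Alift s m r n (e 0) ≤ Alift s m r n (e l) + i ∧
            Alift s m r n (e l) + i < Alift s m r n (e (l + 1)) := by
        intro l hl i hi
        have h0l : e 0 ≤ e l := by
          rcases Nat.eq_zero_or_pos l with rfl | hl0
          · exact le_refl _
          · exact (hchain l (by omega) 0 hl0).le
        have hA0l := hAmono.monotone h0l
        have hmr := Nat.min_le_right s (Alift s m r n (e (l + 1)) - Alift s m r n (e l))
        have hll := hAmono.monotone (hemono l hl).le
        constructor
        · omega
        · omega
      have hsub_window : ∀ l, l < k →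
          Alift s m r n (e (l + 1)) ≤ Alift s m r n (e 0) + n := by
        intro l hl
        have h1 : e (l + 1) ≤ e k := by
          rcases Nat.eq_or_lt_of_le (show l + 1 ≤ k from hl) with h | h
          · rw [h]
          · exact (hchain k (le_refl k) (l + 1) h).le
        calc Alift s m r n (e (l + 1)) ≤ Alift s m r n (e k) := hAmono.monotone h1
        _ = Alift s m r n (e 0) + n := hAek
      set P : ℕ → Finset ℕ := fun l =>
        (Finset.range (min s (Alift s m r n (e (l + 1)) - Alift s m r n (e l)))).image
          (fun i => (Alift s m r n (e l) + i) % n) with hP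
      have hPcard : ∀ l, (P l).card
          = min s (Alift s m r n (e (l + 1)) - Alift s m r n (e l)) := by
        intro l
        apply image_mod_card n _ _ hn0
        have := hminle l
        omega
      have hdisjkey : ∀ l1 l2, l1 < l2 → l2 < k → Disjoint (P l1) (P l2) := by
        intro l1 l2 h12 h2k
        rw [Finset.disjoint_left]
        intro x hx1 hx2
        simp only [hP, Finset.mem_image, Finset.mem_range] at hx1 hx2
        obtain ⟨i1, hi1, heq1⟩ := hx1
        obtain ⟨i2, hi2, heq2⟩ := hx2
        obtain ⟨w11, w12⟩ := hmem_window l1 (by omega) i1 hi1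
        obtain ⟨w21, w22⟩ := hmem_window l2 h2k i2 hi2
        have hs1 := hsub_window l1 (by omega)
        have hs2 := hsub_window l2 h2k
        have hueq : Alift s m r n (e l1) + i1 = Alift s m r n (e l2) + i2 :=
          mod_window_inj n (Alift s m r n (e 0)) _ _ hn0 w11 (by omega) w21 (by omega)
            (by rw [heq1, heq2])
        have hmid : e (l1 + 1) ≤ e l2 := by
          rcases Nat.eq_or_lt_of_le (show l1 + 1 ≤ l2 by omega) with h | h
          · rw [h]
          · exact (hchain l2 (by omega) (l1 + 1) h).le
        have := hAmono.monotone hmid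
        omega
      have hdisj : ∀ l1 ∈ Finset.range k, ∀ l2 ∈ Finset.range k, l1 ≠ l2 →
          Disjoint (P l1) (P l2) := by
        intro l1 h1 l2 h2 hne
        rw [Finset.mem_range] at h1 h2
        rcases Nat.lt_trichotomy l1 l2 with h | h | h
        · exact hdisjkey l1 l2 h h2
        · exact absurd h hne
        · exact (hdisjkey l2 l1 h h1).symm
      have hPsub : ∀ l ∈ Finset.range k, P l ⊆ H.V := by
        intro l hl
        rw [Finset.mem_range] at hl
        intro x hx
        simp only [hP, Finset.mem_image, Finset.mem_range] at hx
        obtain ⟨i, hi, rfl⟩ := hx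
        have helm : e l % m ∈ T := (hT'mem (e l) (heT' l hl)).2.2
        have hedge : circEdge (Iset m r) s n (e l % m) ∈ H.E :=
          (Finset.mem_filter.mp helm).2
        apply H.edges_sub _ hedge
        rw [circEdge_eq_image s m r n (e l % m) (Nat.mod_lt _ hm0)]
        refine Finset.mem_image.mpr ⟨i, Finset.mem_range.mpr ?_, ?_⟩
        · have := hminle l
          omega
        · exact Alift_mod_add s m r n (e l) i hm0
      have hbig : (∑ l ∈ Finset.range k,
          min s (Alift s m r n (e (l + 1)) - Alift s m r n (e l))) ≤ H.V.card := by
        calc (∑ l ∈ Finset.range k,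
            min s (Alift s m r n (e (l + 1)) - Alift s m r n (e l)))
            = ∑ l ∈ Finset.range k, (P l).card := by
              apply Finset.sum_congr rfl
              intro l _
              rw [hPcard l]
        _ = ((Finset.range k).biUnion P).card := (Finset.card_biUnion hdisj).symm
        _ ≤ H.V.card := Finset.card_le_card (by
              intro x hx
              obtain ⟨l, hl, hxl⟩ := Finset.mem_biUnion.mp hx
              exact hPsub l hl hxl)
      have haux := aux_sum s m r n hs hm hr hnr k hk1 e 0 hemono hfinal (by omega)
        (by omega)
      simp only [Finset.range_zero, Finset.sum_empty, Nat.mul_zero, Nat.add_zero,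
        Nat.zero_mul] at haux
      calc k * n < k * n + 1 := by omega
      _ ≤ m * (∑ l ∈ Finset.range k,
            min s (Alift s m r n (e (l + 1)) - Alift s m r n (e l))) := haux
      _ ≤ m * H.V.card := Nat.mul_le_mul_left m hbig
    -- conclude
    have hV0 : 0 < H.V.card := Finset.card_pos.mpr hHne
    rw [hdens]
    unfold SUHypergraph.density
    rw [hHEcard]
    rw [div_lt_div_iff₀ (by exact_mod_cast hV0) (by exact_mod_cast hn0)]
    exact_mod_cast hmain
end

section
/- Let α > 0 be irrational and let (R,H) be a minimally safe rooted s-uniform hypergraph of type (v,e) with v > 1. Then v − eα < 1. -/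
open scoped Classical

open SUHypergraph

private lemma card_split (A : Finset ℕ) {R S T : Finset ℕ} (hRS : R ⊆ S) (hST : S ⊆ T) :
    ((A ∩ T) \ R).card = ((A ∩ S) \ R).card + ((A ∩ T) \ S).card := by
  rw [← Finset.card_union_of_disjoint]
  · congr 1
    ext x
    simp only [Finset.mem_union, Finset.mem_sdiff, Finset.mem_inter]
    have h1 := @hRS x
    have h2 := @hST x
    tauto
  · rw [Finset.disjoint_left]
    intro x hx hx2
    simp only [Finset.mem_sdiff, Finset.mem_inter] at hx hx2
    exact hx2.2 hx.1.2

private lemma card_edge_split {s : ℕ} (H : SUHypergraph s) {R S T : Finset ℕ}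
    (hRS : R ⊆ S) (hST : S ⊆ T) :
    ((H.E.filter (fun e => e ⊆ T)).filter (fun f => ¬ f ⊆ R)).card
      = ((H.E.filter (fun e => e ⊆ S)).filter (fun f => ¬ f ⊆ R)).card
        + ((H.E.filter (fun e => e ⊆ T)).filter (fun f => ¬ f ⊆ S)).card := by
  rw [← Finset.card_union_of_disjoint]
  · congr 1
    ext f
    simp only [Finset.mem_union, Finset.mem_filter]
    have h1 : f ⊆ S → f ⊆ T := fun h => h.trans hST
    have h2 : f ⊆ R → f ⊆ S := fun h => h.trans hRS
    tauto
  · rw [Finset.disjoint_left]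
    intro f hf hf2
    simp only [Finset.mem_filter] at hf hf2
    exact hf2.2 hf.1.2

private lemma exVal_add {s : ℕ} (α : ℝ) (H : SUHypergraph s) {R S T : Finset ℕ}
    (hRS : R ⊆ S) (hST : S ⊆ T) :
    exVal α R (H.restrict T) = exVal α R (H.restrict S) + exVal α S (H.restrict T) := by
  unfold SUHypergraph.exVal SUHypergraph.restrict
  simp only
  rw [card_split H.V hRS hST, card_edge_split H hRS hST]
  push_cast
  ring

private lemma exVal_restrict_self {s : ℕ} (α : ℝ) (R : Finset ℕ) (H : SUHypergraph s) :
    exVal α R (H.restrict H.V) = exVal α R H := by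
  unfold SUHypergraph.exVal SUHypergraph.restrict
  simp only [Finset.inter_self]
  rw [Finset.filter_true_of_mem (fun e he => H.edges_sub e he)]

private lemma neg_of_not_sparse {s : ℕ} {α : ℝ} (hα : 0 < α) (hirr : Irrational α)
    {H : SUHypergraph s} {S T : Finset ℕ} (hST : S ⊂ T) (hTV : T ⊆ H.V)
    (h : ¬ IsSparse α S (H.restrict T)) :
    exVal α S (H.restrict T) < 0 := by
  rw [IsSparse, not_lt] at h
  rcases lt_or_eq_of_le h with h' | h'
  · exact h'
  exfalso
  rw [SUHypergraph.exVal, SUHypergraph.restrict] at h'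
  simp only at h'
  set a := ((H.V ∩ T) \ S).card with ha
  set b := ((H.E.filter (fun e => e ⊆ T)).filter (fun f => ¬ f ⊆ S)).card with hb
  have heq : (a : ℝ) = (b : ℝ) * α := by linarith
  have hapos : 0 < a := by
    obtain ⟨x, hxT, hxS⟩ := Finset.exists_of_ssubset hST
    refine Finset.card_pos.mpr ⟨x, ?_⟩
    simp only [Finset.mem_sdiff, Finset.mem_inter]
    exact ⟨⟨hTV hxT, hxT⟩, hxS⟩
  have hbne : b ≠ 0 := by
    intro hb0
    rw [hb0] at heq
    simp only [Nat.cast_zero, zero_mul, Nat.cast_eq_zero] at heq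
    omega
  exact hirr ⟨(a : ℚ) / (b : ℚ), by
    push_cast
    rw [div_eq_iff (by exact_mod_cast hbne : ((b : ℕ) : ℝ) ≠ 0)]
    linarith⟩

/-- if `(R,H)` is minimally safe of type `(v,e)` with `v > 1`,
then `v - e·α < 1`. -/
theorem stmt13 (s : ℕ) (hs : 2 ≤ s) (α : ℝ) (hα : 0 < α) (hirr : Irrational α)
    (H : SUHypergraph s) (R : Finset ℕ) (hR : R ⊂ H.V)
    (hms : MinimallySafe α R H)
    (hv : 1 < (H.V \ R).card) :
    ((H.V \ R).card : ℝ) - ((H.E.filter (fun f => ¬ f ⊆ R)).card : ℝ) * α < 1 := by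
  obtain ⟨hsafe, hmin⟩ := hms
  push_neg at hmin
  -- Main claim: for any R ⊊ S ⊆ V with S ≠ V, exVal α R H < exVal α R (H|_S)
  have key : ∀ n : ℕ, ∀ S : Finset ℕ, (H.V \ S).card ≤ n → R ⊂ S → S ⊆ H.V → S ≠ H.V →
      exVal α R H < exVal α R (H.restrict S) := by
    intro n
    induction n with
    | zero =>
      intro S hcard hRS hSV hne
      exfalso
      apply hne
      apply Finset.Subset.antisymm hSV
      intro x hx
      by_contra hxS
      have : x ∈ H.V \ S := Finset.mem_sdiff.mpr ⟨hx, hxS⟩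
      have := Finset.card_pos.mpr ⟨x, this⟩
      omega
    | succ n ih =>
      intro S hcard hRS hSV hne
      have hnotsafe : ¬ Safe α S H := hmin S hRS ⟨hSV, fun h => hne (Finset.Subset.antisymm hSV h)⟩
      rw [Safe] at hnotsafe
      push_neg at hnotsafe
      obtain ⟨T, hST, hTV, hns⟩ := hnotsafe
      have hneg : exVal α S (H.restrict T) < 0 := neg_of_not_sparse hα hirr hST hTV hns
      have hadd := exVal_add α H hRS.subset hST.subset
      by_cases hTeq : T = H.V
      · subst hTeq
        rw [exVal_restrict_self] at hadd
        linarith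
      · have hlt : exVal α R H < exVal α R (H.restrict T) := by
          apply ih T _ (ssubset_of_ssubset_of_subset hRS hST.subset) hTV hTeq
          obtain ⟨x, hxT, hxS⟩ := Finset.exists_of_ssubset hST
          have hsub : H.V \ T ⊂ H.V \ S := by
            constructor
            · exact Finset.sdiff_subset_sdiff (le_refl _) hST.subset
            · intro hcontra
              have : x ∈ H.V \ S := Finset.mem_sdiff.mpr ⟨hTV hxT, hxS⟩
              have := hcontra this
              exact (Finset.mem_sdiff.mp this).2 hxT
          have := Finset.card_lt_card hsub
          omega
        linarith
  -- pick u ∈ V \ R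
  obtain ⟨u, hu⟩ := Finset.card_pos.mp (by omega : 0 < (H.V \ R).card)
  rw [Finset.mem_sdiff] at hu
  set S₀ := insert u R with hS₀
  have hRS₀ : R ⊂ S₀ := Finset.ssubset_insert hu.2
  have hS₀V : S₀ ⊆ H.V := Finset.insert_subset hu.1 hR.subset
  have hS₀ne : S₀ ≠ H.V := by
    intro h
    have : H.V \ R ⊆ {u} := by
      intro x hx
      rw [Finset.mem_sdiff] at hx
      have : x ∈ S₀ := h ▸ hx.1
      rw [hS₀, Finset.mem_insert] at this
      rcases this with rfl | hxR
      · exact Finset.mem_singleton_self x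
      · exact absurd hxR hx.2
    have := Finset.card_le_card this
    simp at this
    omega
  have hbound : exVal α R (H.restrict S₀) ≤ 1 := by
    rw [SUHypergraph.exVal, SUHypergraph.restrict]
    simp only
    have hc : ((H.V ∩ S₀) \ R).card ≤ 1 := by
      have : (H.V ∩ S₀) \ R ⊆ {u} := by
        intro x hx
        simp only [Finset.mem_sdiff, Finset.mem_inter, hS₀, Finset.mem_insert] at hx
        rcases hx.1.2 with rfl | hxR
        · exact Finset.mem_singleton_self x
        · exact absurd hxR hx.2
      have := Finset.card_le_card this
      simpa using this
    have hnn : (0 : ℝ) ≤ (((H.E.filter (fun e => e ⊆ S₀)).filter (fun f => ¬ f ⊆ R)).card : ℝ) * α := by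
      positivity
    have : (((H.V ∩ S₀) \ R).card : ℝ) ≤ 1 := by exact_mod_cast hc
    linarith
  have := key (H.V \ S₀).card S₀ (le_refl _) hRS₀ hS₀V hS₀ne
  have hfin : exVal α R H < 1 := by linarith
  rw [SUHypergraph.exVal] at hfin
  exact hfin
end
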